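/- For g ≥ 2, P_g(√2) < 0 and P_g'(x) > 0 for all x > √2; consequently P_g has a unique real root α > √2. -/

import Mathlib

theorem stmt_1 (g : ℕ) (hg : 2 ≤ g) :
    (Real.sqrt 2) ^ (2 * g + 1) - 2 * (Real.sqrt 2) ^ (2 * g - 1)
        - 2 * (Real.sqrt 2) ^ 2 + 1 < 0 ∧
    (∀ x : ℝ, Real.sqrt 2 < x →
      0 < deriv (fun y : ℝ => y ^ (2 * g + 1) - 2 * y ^ (2 * g - 1) - 2 * y ^ 2 + 1) x) ∧
    (∃! α : ℝ, Real.sqrt 2 < α ∧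
      α ^ (2 * g + 1) - 2 * α ^ (2 * g - 1) - 2 * α ^ 2 + 1 = 0) := by
  obtain ⟨k, rfl⟩ : ∃ k, g = k + 2 := ⟨g - 2, by omega⟩
  simp only [show 2 * (k + 2) + 1 = 2 * k + 5 from by ring,
    show 2 * (k + 2) - 1 = 2 * k + 3 from by omega]
  set s := Real.sqrt 2 with hs
  have hs2 : s ^ 2 = 2 := Real.sq_sqrt (by norm_num)
  have hs0 : 0 ≤ s := Real.sqrt_nonneg 2
  have hs1 : 1 < s := by nlinarith
  set f : ℝ → ℝ := fun y => y ^ (2 * k + 5) - 2 * y ^ (2 * k + 3) - 2 * y ^ 2 + 1 with hf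
  have hderiv : ∀ x : ℝ, deriv f x
      = (2 * k + 5) * x ^ (2 * k + 4) - 2 * ((2 * k + 3) * x ^ (2 * k + 2)) - 4 * x := by
    intro x
    have h : HasDerivAt f
        ((2 * k + 5) * x ^ (2 * k + 4) - 2 * ((2 * k + 3) * x ^ (2 * k + 2)) - 4 * x) x := by
      have h1 := hasDerivAt_pow (2 * k + 5) x
      have h2 := (hasDerivAt_pow (2 * k + 3) x).const_mul (2 : ℝ)
      have h3 := (hasDerivAt_pow 2 x).const_mul (2 : ℝ)
      have h4 := ((h1.sub h2).sub h3).add_const (1 : ℝ)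
      convert h4 using 1
      all_goals try rfl
      simp only [show 2 * k + 5 - 1 = 2 * k + 4 from by omega,
        show 2 * k + 3 - 1 = 2 * k + 2 from by omega]
      push_cast
      ring
    exact h.deriv
  have hpos : ∀ x : ℝ, s < x → 0 < deriv f x := by
    intro x hx
    rw [hderiv]
    have hx1 : 1 < x := lt_trans hs1 hx
    have hx2 : 2 < x ^ 2 := by nlinarith
    have ha : x ≤ x ^ (2 * k + 2) := le_self_pow₀ (le_of_lt hx1) (by omega)
    have hxp : (0:ℝ) < x := by linarith
    have hap : (0:ℝ) < x ^ (2 * k + 2) := pow_pos hxp _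
    have hsplit : x ^ (2 * k + 4) = x ^ (2 * k + 2) * x ^ 2 := by
      rw [← pow_add]
    rw [hsplit]
    have hk : (0:ℝ) ≤ (k : ℝ) := Nat.cast_nonneg k
    push_cast
    nlinarith [mul_pos hap (sub_pos.mpr hx2), mul_nonneg hk (mul_pos hap (sub_pos.mpr hx2)).le]
  have hfs : f s < 0 := by
    have : s ^ (2 * k + 5) = s ^ (2 * k + 3) * s ^ 2 := by rw [← pow_add]
    simp only [hf]
    rw [this, hs2]
    ring_nf
    nlinarith [pow_pos (lt_trans one_pos hs1) (2 * k + 3)]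
  refine ⟨by simpa [hf, hs2] using hfs, hpos, ?_⟩
  have hcont : Continuous f := by fun_prop
  have hmono : StrictMonoOn f (Set.Ici s) := by
    apply strictMonoOn_of_deriv_pos (convex_Ici s) hcont.continuousOn
    intro x hx
    rw [interior_Ici] at hx
    exact hpos x hx
  have hs_lt_2 : s < 2 := by nlinarith
  have hf2 : 0 < f 2 := by
    simp only [hf]
    have h16 : (16:ℝ) ≤ 2 ^ (2 * k + 4) := by
      calc (16:ℝ) = 2 ^ 4 := by norm_num
      _ ≤ 2 ^ (2 * k + 4) := pow_le_pow_right₀ (by norm_num) (by omega)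
    have e1 : (2:ℝ) ^ (2 * k + 5) = 2 * 2 ^ (2 * k + 4) := by rw [← pow_succ']
    have e2 : (2:ℝ) ^ (2 * k + 3) * 2 = 2 ^ (2 * k + 4) := by rw [← pow_succ]
    nlinarith
  obtain ⟨α, hαmem, hα0⟩ : ∃ α ∈ Set.Ioo s 2, f α = 0 := by
    have := intermediate_value_Ioo (le_of_lt hs_lt_2) hcont.continuousOn
    have h0 : (0:ℝ) ∈ Set.Ioo (f s) (f 2) := ⟨hfs, hf2⟩
    obtain ⟨α, hα, hfα⟩ := this h0
    exact ⟨α, hα, hfα⟩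
  refine ⟨α, ⟨hαmem.1, hα0⟩, ?_⟩
  rintro β ⟨hβs, hβ0⟩
  exact hmono.injOn (Set.mem_Ici.mpr hβs.le) (Set.mem_Ici.mpr hαmem.1.le) (by show f β = f α; rw [hα0]; exact hβ0)
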